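/- Let X, Y¹ and Y² be Banach spaces and let Y = L_c(Y¹,Y²) be the Banach space of bounded linear operators from Y¹ to Y², with the operator norm. Let A ⊆ X be an open subset, W ⊆ X a finite-dimensional subspace, and K ⊆ W ∩ A a compact and convex subset. Let F ∈ C¹(A,Y) be such that F|_{W∩A} is injective, F'(x)|_W is injective for every x ∈ W ∩ A, and the operator F'(ξ)τ : Y¹ → Y² is compact for every ξ ∈ A and τ ∈ W. Let P¹_N : Y¹ → Y¹ and P²_N : Y² → Y² (N ∈ ℕ) be bounded linear maps such that P²_N y → y for every y ∈ Y² and (P¹_N)* φ → φ in the dual of Y¹ for every continuous linear functional φ on Y¹, and define Q_N : Y → Y by Q_N(T) = P²_N ∘ T ∘ P¹_N. Then there exist N ∈ ℕ and C > 0 such that ‖x₁ − x₂‖_X ≤ C ‖Q_N(F(x₁)) − Q_N(F(x₂))‖_Y for all x₁, x₂ ∈ K. -/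

import Mathlib

open Filter Topology

section AuxHelpers
open Filter Topology Metric Set

variable {E F : Type*} [NormedAddCommGroup E] [NormedSpace ℝ E]
  [NormedAddCommGroup F] [NormedSpace ℝ F]

lemma opnorm_le_of_unit {f : E →L[ℝ] F} {c : ℝ} (hc : 0 ≤ c)
    (h : ∀ x : E, ‖x‖ ≤ 1 → ‖f x‖ ≤ c) : ‖f‖ ≤ c := by
  refine f.opNorm_le_bound hc fun x => ?_
  rcases eq_or_ne x 0 with rfl | hx
  · simp [hc]
  · have hx' : ‖x‖ ≠ 0 := norm_ne_zero_iff.2 hx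
    have h1 : ‖(‖x‖⁻¹ • x)‖ ≤ 1 := by
      rw [norm_smul, norm_inv, norm_norm, inv_mul_cancel₀ hx']
    have h2 := h _ h1
    rw [map_smul, norm_smul, norm_inv, norm_norm] at h2
    calc ‖f x‖ = ‖x‖ * (‖x‖⁻¹ * ‖f x‖) := by field_simp
    _ ≤ ‖x‖ * c := mul_le_mul_of_nonneg_left h2 (norm_nonneg x)
    _ = c * ‖x‖ := mul_comm _ _

lemma tendsto_zero_of_norm_ev {f : ℕ → E} (h : ∀ ε > (0:ℝ), ∀ᶠ n in atTop, ‖f n‖ ≤ ε) :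
    Tendsto f atTop (𝓝 0) := by
  rw [NormedAddCommGroup.tendsto_nhds_zero]
  intro ε hε
  exact (h (ε/2) (half_pos hε)).mono fun n hn => lt_of_le_of_lt hn (half_lt_self hε)

lemma lemmaU (R : ℕ → E →L[ℝ] F) {M : ℝ} (hM : ∀ n, ‖R n‖ ≤ M)
    {s : Set E} (hs : TotallyBounded s)
    (hpt : ∀ x ∈ s, Tendsto (fun n => R n x) atTop (𝓝 0))
    {ε : ℝ} (hε : 0 < ε) : ∀ᶠ n in atTop, ∀ x ∈ s, ‖R n x‖ ≤ ε := by
  have hM0 : 0 ≤ M := le_trans (norm_nonneg _) (hM 0)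
  set δ := ε / (2 * (M + 1)) with hδdef
  have hδ : 0 < δ := by positivity
  obtain ⟨t, hts, htf, hcov⟩ := totallyBounded_iff_subset.1 hs _ (dist_mem_uniformity hδ)
  have hev : ∀ᶠ n in atTop, ∀ y ∈ t, ‖R n y‖ ≤ ε / 2 := by
    rw [Filter.eventually_all_finite htf]
    intro y hy
    exact (NormedAddCommGroup.tendsto_nhds_zero.1 (hpt y (hts hy)) (ε/2)
      (half_pos hε)).mono fun n h => h.le
  filter_upwards [hev] with n hn x hx
  obtain ⟨y, hy, hxy⟩ := Set.mem_iUnion₂.1 (hcov hx)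
  have hxy' : dist x y < δ := hxy
  have hMδ : (M+1) * δ = ε / 2 := by
    rw [hδdef]; field_simp
  calc ‖R n x‖ = ‖R n (x - y) + R n y‖ := by rw [map_sub]; rw [sub_add_cancel]
  _ ≤ ‖R n (x - y)‖ + ‖R n y‖ := norm_add_le _ _
  _ ≤ M * ‖x - y‖ + ε/2 := add_le_add ((R n).le_of_opNorm_le (hM n) _) (hn y hy)
  _ ≤ M * δ + ε/2 := by
      have := le_of_lt hxy'
      rw [dist_eq_norm] at this
      exact add_le_add (mul_le_mul_of_nonneg_left this hM0) le_rfl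
  _ ≤ (M+1) * δ + ε/2 := by nlinarith
  _ = ε := by rw [hMδ]; ring

lemma schauder_tb (T : E →L[ℝ] F) (hT : IsCompactOperator T) :
    TotallyBounded ((fun φ : F →L[ℝ] ℝ => φ.comp T) '' Metric.closedBall 0 1) := by
  rw [Metric.totallyBounded_iff]
  intro ε hε
  have h1 : IsCompact (closure (⇑T '' Metric.closedBall 0 1)) := by
    have := hT.isCompact_closure_image_closedBall (𝕜₂ := ℝ) (f := (T : E →ₗ[ℝ] F)) 1
    exact this
  have hD : TotallyBounded (⇑T '' Metric.closedBall 0 1) :=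
    h1.totallyBounded.subset subset_closure
  have hε8 : (0:ℝ) < ε / 8 := by positivity
  obtain ⟨t, htf, htcov⟩ := Metric.totallyBounded_iff.1 hD (ε/8) hε8
  haveI : Fintype ↥t := htf.fintype
  set Φ : (F →L[ℝ] ℝ) → (↥t → ℝ) := fun φ y => φ y with hΦ
  have hΦb : TotallyBounded (Φ '' Metric.closedBall 0 1) := by
    have hsub : Φ '' Metric.closedBall 0 1 ⊆
        Set.pi Set.univ (fun y : ↥t => Metric.closedBall (0:ℝ) ‖(y:F)‖) := by
      rintro _ ⟨φ, hφ, rfl⟩ y _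
      have hφ1 : ‖φ‖ ≤ 1 := by simpa using hφ
      simp only [Metric.mem_closedBall, dist_zero_right]
      calc ‖φ (y:F)‖ ≤ ‖φ‖ * ‖(y:F)‖ := φ.le_opNorm _
      _ ≤ 1 * ‖(y:F)‖ := mul_le_mul_of_nonneg_right hφ1 (norm_nonneg _)
      _ = ‖(y:F)‖ := one_mul _
    exact (isCompact_univ_pi (fun y => isCompact_closedBall _ _)).totallyBounded.subset hsub
  obtain ⟨c, hcsub, hcf, hccov⟩ :=
    totallyBounded_iff_subset.1 hΦb _ (dist_mem_uniformity hε8)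
  have hrepex : ∀ g ∈ c, ∃ φ, φ ∈ Metric.closedBall (0:F →L[ℝ] ℝ) 1 ∧ Φ φ = g :=
    fun g hg => hcsub hg
  choose! rep hrep1 hrep2 using hrepex
  refine ⟨(fun g => (rep g).comp T) '' c, hcf.image _, ?_⟩
  rintro _ ⟨φ, hφ, rfl⟩
  obtain ⟨g, hg, hdist⟩ := Set.mem_iUnion₂.1 (hccov ⟨φ, hφ, rfl⟩)
  have hdist' : dist (Φ φ) (Φ (rep g)) < ε/8 := by rw [hrep2 g hg]; exact hdist
  set ψ := rep g with hψ
  have hψball : ψ ∈ Metric.closedBall (0:F →L[ℝ] ℝ) 1 := hrep1 g hg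
  have hcomp : ∀ y : ↥t, |φ (y:F) - ψ (y:F)| < ε/8 := by
    intro y
    have := dist_le_pi_dist (Φ φ) (Φ ψ) y
    have h2 : dist (Φ φ y) (Φ ψ y) < ε/8 := lt_of_le_of_lt this hdist'
    simpa [Real.dist_eq] using h2
  have hnorm : ‖φ.comp T - ψ.comp T‖ ≤ ε/2 := by
    refine opnorm_le_of_unit (by positivity) fun u hu => ?_
    have hTu : T u ∈ ⇑T '' Metric.closedBall 0 1 :=
      ⟨u, by simpa using hu, rfl⟩
    obtain ⟨y, hy, hTy⟩ := Set.mem_iUnion₂.1 (htcov hTu)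
    have hTy' : ‖T u - y‖ < ε/8 := by
      have : dist (T u) y < ε/8 := hTy
      rwa [dist_eq_norm] at this
    have hφψ : ‖φ - ψ‖ ≤ 2 := by
      have h1 : ‖φ‖ ≤ 1 := by simpa using hφ
      have h2 : ‖ψ‖ ≤ 1 := by simpa using hψball
      calc ‖φ - ψ‖ ≤ ‖φ‖ + ‖ψ‖ := norm_sub_le _ _
      _ ≤ 2 := by linarith
    have key : (φ.comp T - ψ.comp T) u = (φ - ψ) y + (φ - ψ) (T u - y) := by
      simp only [ContinuousLinearMap.sub_apply, ContinuousLinearMap.comp_apply, map_sub]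
      ring
    rw [key]
    have hb1 : |(φ - ψ) y| < ε/8 := by
      have := hcomp ⟨y, hy⟩
      simpa [ContinuousLinearMap.sub_apply] using this
    have hb2 : ‖(φ - ψ) (T u - y)‖ ≤ 2 * (ε/8) := by
      calc ‖(φ - ψ) (T u - y)‖ ≤ ‖φ - ψ‖ * ‖T u - y‖ := (φ - ψ).le_opNorm _
      _ ≤ 2 * (ε/8) := mul_le_mul hφψ hTy'.le (norm_nonneg _) (by norm_num)
    calc ‖(φ - ψ) y + (φ - ψ) (T u - y)‖ ≤ ‖(φ - ψ) y‖ + ‖(φ - ψ) (T u - y)‖ := norm_add_le _ _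
    _ ≤ ε/8 + 2 * (ε/8) := add_le_add (le_of_lt (by simpa using hb1)) hb2
    _ ≤ ε/2 := by linarith
  refine Set.mem_iUnion₂.2 ⟨ψ.comp T, ⟨g, hg, rfl⟩, ?_⟩
  rw [Metric.mem_ball, dist_eq_norm]
  exact lt_of_le_of_lt hnorm (by linarith)


variable {E F : Type*} [NormedAddCommGroup E] [NormedSpace ℝ E]
  [NormedAddCommGroup F] [NormedSpace ℝ F]

example (f : ℕ → ℝ) (a : ℝ) (h : Tendsto f atTop (𝓝 a)) : BddAbove (Set.range f) :=
  h.bddAbove_range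

lemma bound_P2 [CompleteSpace F] (P₂ : ℕ → F →L[ℝ] F)
    (hP₂ : ∀ y : F, Tendsto (fun N => P₂ N y) atTop (𝓝 y)) :
    ∃ M, 0 ≤ M ∧ ∀ n, ‖P₂ n‖ ≤ M := by
  obtain ⟨C, hC⟩ := banach_steinhaus (g := P₂) (fun y => by
    obtain ⟨C, hC⟩ := (hP₂ y).norm.bddAbove_range
    exact ⟨C, fun n => hC (Set.mem_range_self n)⟩)
  exact ⟨max C 0, le_max_right _ _, fun n => (hC n).trans (le_max_left _ _)⟩

lemma bound_P1 (P₁ : ℕ → E →L[ℝ] E)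
    (hP₁ : ∀ φ : E →L[ℝ] ℝ, Tendsto (fun N => φ.comp (P₁ N)) atTop (𝓝 φ)) :
    ∃ M, 0 ≤ M ∧ (∀ n, ‖(ContinuousLinearMap.compL ℝ E E ℝ).flip (P₁ n)‖ ≤ M)
      ∧ ∀ n, ‖P₁ n‖ ≤ M := by
  have hg : ∀ (n : ℕ) (φ : E →L[ℝ] ℝ),
      (ContinuousLinearMap.compL ℝ E E ℝ).flip (P₁ n) φ = φ.comp (P₁ n) := by
    intro n φ; rfl
  obtain ⟨C, hC⟩ := banach_steinhaus
      (g := fun n => (ContinuousLinearMap.compL ℝ E E ℝ).flip (P₁ n)) (fun φ => by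
    obtain ⟨C, hC⟩ := (hP₁ φ).norm.bddAbove_range
    refine ⟨C, fun n => ?_⟩
    rw [hg]
    exact hC (Set.mem_range_self n))
  refine ⟨max C 0, le_max_right _ _, fun n => (hC n).trans (le_max_left _ _), fun n => ?_⟩
  refine (P₁ n).opNorm_le_bound (le_max_right _ _) fun x => ?_
  rcases eq_or_ne (P₁ n x) 0 with h0 | h0
  · rw [h0, norm_zero]; positivity
  · obtain ⟨φ, hφ1, hφx⟩ := exists_dual_vector ℝ (P₁ n x) (norm_ne_zero_iff.2 h0)
    have hφx' : φ (P₁ n x) = ‖P₁ n x‖ := by simpa using hφx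
    calc ‖P₁ n x‖ = φ (P₁ n x) := hφx'.symm
    _ ≤ ‖(φ.comp (P₁ n)) x‖ := le_abs_self _
    _ ≤ ‖φ.comp (P₁ n)‖ * ‖x‖ := (φ.comp (P₁ n)).le_opNorm x
    _ = ‖(ContinuousLinearMap.compL ℝ E E ℝ).flip (P₁ n) φ‖ * ‖x‖ := by rw [hg]
    _ ≤ (C * ‖φ‖) * ‖x‖ := by
        exact mul_le_mul_of_nonneg_right
          (((ContinuousLinearMap.compL ℝ E E ℝ).flip (P₁ n)).le_of_opNorm_le (hC n) φ)
          (norm_nonneg x)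
    _ = C * ‖x‖ := by rw [hφ1, mul_one]
    _ ≤ max C 0 * ‖x‖ := mul_le_mul_of_nonneg_right (le_max_left _ _) (norm_nonneg x)

variable {E F : Type*} [NormedAddCommGroup E] [NormedSpace ℝ E]
  [NormedAddCommGroup F] [NormedSpace ℝ F]

lemma tendsto_Q [CompleteSpace F] (P₁ : ℕ → E →L[ℝ] E) (P₂ : ℕ → F →L[ℝ] F)
    (hP₂ : ∀ y : F, Tendsto (fun N => P₂ N y) atTop (𝓝 y))
    (hP₁ : ∀ φ : E →L[ℝ] ℝ, Tendsto (fun N => φ.comp (P₁ N)) atTop (𝓝 φ))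
    (T : E →L[ℝ] F) (hT : IsCompactOperator T) :
    Tendsto (fun N => (P₂ N).comp (T.comp (P₁ N))) atTop (𝓝 T) := by
  obtain ⟨M₂, hM₂0, hM₂⟩ := bound_P2 P₂ hP₂
  obtain ⟨M₁, hM₁0, hM₁g, hM₁⟩ := bound_P1 P₁ hP₁
  have hDtb : TotallyBounded (⇑T '' Metric.closedBall 0 1) := by
    have h1 : IsCompact (closure (⇑T '' Metric.closedBall 0 1)) :=
      hT.isCompact_closure_image_closedBall (𝕜₂ := ℝ) (f := (T : E →ₗ[ℝ] F)) 1
    exact h1.totallyBounded.subset subset_closure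
  -- Part B : ‖P₂ₙ ∘ T - T‖ → 0
  have hB : Tendsto (fun N => (P₂ N).comp T - T) atTop (𝓝 0) := by
    apply tendsto_zero_of_norm_ev
    intro ε hε
    have hRn : ∀ n, ‖P₂ n - ContinuousLinearMap.id ℝ F‖ ≤ M₂ + 1 := fun n =>
      (norm_sub_le _ _).trans (add_le_add (hM₂ n) ContinuousLinearMap.norm_id_le)
    have hpt : ∀ y ∈ ⇑T '' Metric.closedBall 0 1,
        Tendsto (fun n => (P₂ n - ContinuousLinearMap.id ℝ F) y) atTop (𝓝 0) := by
      intro y _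
      have := tendsto_sub_nhds_zero_iff.2 (hP₂ y)
      simpa using this
    have hev := lemmaU _ hRn hDtb hpt hε
    filter_upwards [hev] with n hn
    refine opnorm_le_of_unit hε.le fun u hu => ?_
    have heq : ((P₂ n).comp T - T) u = (P₂ n - ContinuousLinearMap.id ℝ F) (T u) := by simp
    rw [heq]
    exact hn _ ⟨u, by simpa using hu, rfl⟩
  -- Part A : ‖T ∘ P₁ₙ - T‖ → 0
  have hA0 : Tendsto (fun N => ‖T.comp (P₁ N) - T‖) atTop (𝓝 0) := by
    have h := tendsto_zero_of_norm_ev (f := fun N => T.comp (P₁ N) - T) ?_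
    · simpa using h.norm
    intro ε hε
    set R : ℕ → (E →L[ℝ] ℝ) →L[ℝ] (E →L[ℝ] ℝ) :=
      fun n => (ContinuousLinearMap.compL ℝ E E ℝ).flip (P₁ n) - ContinuousLinearMap.id ℝ _
      with hRdef
    have hRn : ∀ n, ‖R n‖ ≤ M₁ + 1 := fun n =>
      (norm_sub_le _ _).trans (add_le_add (hM₁g n) ContinuousLinearMap.norm_id_le)
    have hpt : ∀ ψ ∈ (fun φ : F →L[ℝ] ℝ => φ.comp T) '' Metric.closedBall 0 1,
        Tendsto (fun n => R n ψ) atTop (𝓝 0) := by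
      intro ψ _
      have := tendsto_sub_nhds_zero_iff.2 (hP₁ ψ)
      simpa [hRdef] using this
    have hev := lemmaU R hRn (schauder_tb T hT) hpt (half_pos hε)
    filter_upwards [hev] with n hn
    refine opnorm_le_of_unit hε.le fun u hu => ?_
    rcases eq_or_ne ((T.comp (P₁ n) - T) u) 0 with h0 | h0
    · rw [h0, norm_zero]; exact hε.le
    · obtain ⟨φ, hφ1, hφx⟩ := exists_dual_vector ℝ _ (norm_ne_zero_iff.2 h0)
      have hφx' : φ ((T.comp (P₁ n) - T) u) = ‖(T.comp (P₁ n) - T) u‖ := by simpa using hφx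
      have hψmem : φ.comp T ∈ (fun φ : F →L[ℝ] ℝ => φ.comp T) '' Metric.closedBall 0 1 :=
        ⟨φ, by simp [hφ1], rfl⟩
      have hkey : φ ((T.comp (P₁ n) - T) u) = (R n (φ.comp T)) u := by
        simp [hRdef, map_sub]
      calc ‖(T.comp (P₁ n) - T) u‖ = φ ((T.comp (P₁ n) - T) u) := hφx'.symm
      _ = (R n (φ.comp T)) u := hkey
      _ ≤ ‖(R n (φ.comp T)) u‖ := le_abs_self _
      _ ≤ ‖R n (φ.comp T)‖ * ‖u‖ := (R n (φ.comp T)).le_opNorm u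
      _ ≤ (ε/2) * 1 := mul_le_mul (hn _ hψmem) hu (norm_nonneg _)
          (by positivity)
      _ ≤ ε := by linarith
  have hA : Tendsto (fun N => (P₂ N).comp (T.comp (P₁ N) - T)) atTop (𝓝 0) := by
    rw [tendsto_zero_iff_norm_tendsto_zero]
    apply squeeze_zero (fun n => norm_nonneg _)
      (g := fun n => M₂ * ‖T.comp (P₁ n) - T‖)
      (fun n => ((P₂ n).opNorm_comp_le _).trans
        (mul_le_mul_of_nonneg_right (hM₂ n) (norm_nonneg _)))
    simpa using hA0.const_mul M₂
  have hsum := (hA.add hB).add_const T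
  rw [zero_add, zero_add] at hsum
  refine hsum.congr fun N => ?_
  rw [ContinuousLinearMap.comp_sub]
  abel
lemma annihilator_of_not_mem {E : Type*} [NormedAddCommGroup E] [NormedSpace ℝ E]
    {Mo : Submodule ℝ E} (hcl : IsClosed (Mo : Set E)) {x : E} (hx : x ∉ Mo) :
    ∃ f : E →L[ℝ] ℝ, (∀ z ∈ Mo, f z = 0) ∧ f x ≠ 0 := by
  obtain ⟨f, u, hfs, hfx⟩ := geometric_hahn_banach_closed_point Mo.convex hcl hx
  have hvanish : ∀ z ∈ Mo, f z = 0 := by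
    intro z hz
    by_contra hfz
    have hmem : ((u + 1) / f z) • z ∈ Mo := Mo.smul_mem _ hz
    have := hfs _ hmem
    rw [map_smul, smul_eq_mul, div_mul_cancel₀ _ hfz] at this
    linarith
  have h0 : (0:ℝ) < u := by
    have := hfs 0 Mo.zero_mem
    rw [map_zero] at this
    linarith [hfx]
  exact ⟨f, hvanish, by intro h; rw [h] at hfx; linarith⟩

lemma diff_mem_compact
    {X Y₁ Y₂ : Type*} [NormedAddCommGroup X] [NormedSpace ℝ X]
    [NormedAddCommGroup Y₁] [NormedSpace ℝ Y₁]
    [NormedAddCommGroup Y₂] [NormedSpace ℝ Y₂] [CompleteSpace Y₂]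
    {A : Set X} {K : Set X} (hKA : K ⊆ A) (hKconv : Convex ℝ K)
    {F : X → (Y₁ →L[ℝ] Y₂)} {F' : X → X →L[ℝ] (Y₁ →L[ℝ] Y₂)}
    (hF : ∀ x ∈ A, HasFDerivAt F (F' x) x)
    {x y : X} (hx : x ∈ K) (hy : y ∈ K)
    (hder : ∀ ξ ∈ K, IsCompactOperator (F' ξ (x - y))) :
    IsCompactOperator (F x - F y) := by
  set Mo : Submodule ℝ (Y₁ →L[ℝ] Y₂) := compactOperator (RingHom.id ℝ) Y₁ Y₂ with hMo
  have hcl : IsClosed (Mo : Set (Y₁ →L[ℝ] Y₂)) := isClosed_setOf_isCompactOperator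
  by_contra hnot
  obtain ⟨f, hvan, hfne⟩ := annihilator_of_not_mem hcl (x := F x - F y) hnot
  set v : X := x - y with hv
  set γ : ℝ → X := fun t => y + t • v with hγ
  have hseg : ∀ t ∈ Set.Icc (0:ℝ) 1, γ t ∈ K := by
    intro t ht
    exact hKconv.add_smul_mem hy (by simpa [hv] using hx) ht
  have hder' : ∀ t ∈ Set.Icc (0:ℝ) 1, HasDerivAt (fun s => f (F (γ s))) 0 t := by
    intro t ht
    have hγd : HasDerivAt γ v t := by
      simpa [hγ] using ((hasDerivAt_id t).smul_const v).const_add y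
    have hFd : HasDerivAt (fun s => F (γ s)) (F' (γ t) v) t :=
      (hF (γ t) (hKA (hseg t ht))).comp_hasDerivAt t hγd
    have hfd : HasDerivAt (fun s => f (F (γ s))) (f (F' (γ t) v)) t :=
      (f.hasFDerivAt).comp_hasDerivAt t hFd
    have hzero : f (F' (γ t) v) = 0 := hvan _ (hder (γ t) (hseg t ht))
    rwa [hzero] at hfd
  have hconst := constant_of_has_deriv_right_zero
    (f := fun s => f (F (γ s))) (a := 0) (b := 1)
    (fun t ht => (hder' t ht).continuousAt.continuousWithinAt)
    (fun t ht => (hder' t (Set.mem_Icc_of_Ico ht)).hasDerivWithinAt)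
  have h10 := hconst 1 (by norm_num)
  have hγ1 : γ 1 = x := by simp [hγ, hv]
  have hγ0 : γ 0 = y := by simp [hγ]
  simp only [hγ1, hγ0] at h10
  exact hfne (by rw [map_sub, h10, sub_self])

end AuxHelpers

open Metric Set in
set_option maxHeartbeats 2000000 in
/-- Corollary `cor:main`, case (b): operator-valued measurements
`Y = L_c(Y¹,Y²)`, `Q_N(T) = P²_N T P¹_N`, with compact Fréchet derivative. -/
theorem corollary_operator_valued
    {X Y₁ Y₂ : Type*} [NormedAddCommGroup X] [NormedSpace ℝ X] [CompleteSpace X]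
    [NormedAddCommGroup Y₁] [NormedSpace ℝ Y₁] [CompleteSpace Y₁]
    [NormedAddCommGroup Y₂] [NormedSpace ℝ Y₂] [CompleteSpace Y₂]
    (A : Set X) (hA : IsOpen A)
    (W : Submodule ℝ X) [FiniteDimensional ℝ W]
    (K : Set X) (hKWA : K ⊆ (W : Set X) ∩ A)
    (hKcomp : IsCompact K) (hKconv : Convex ℝ K)
    (F : X → (Y₁ →L[ℝ] Y₂)) (F' : X → X →L[ℝ] (Y₁ →L[ℝ] Y₂))
    (hF : ∀ x ∈ A, HasFDerivAt F (F' x) x)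
    (hF'cont : ContinuousOn F' A)
    (hFinj : Set.InjOn F ((W : Set X) ∩ A))
    (hF'inj : ∀ x ∈ (W : Set X) ∩ A, Set.InjOn (F' x) (W : Set X))
    -- F'(ξ)τ is a compact operator for every ξ ∈ A and τ ∈ W
    (hcomp : ∀ ξ ∈ A, ∀ τ ∈ W, IsCompactOperator (F' ξ τ))
    (P₁ : ℕ → Y₁ →L[ℝ] Y₁) (P₂ : ℕ → Y₂ →L[ℝ] Y₂)
    -- P²_N → I strongly
    (hP₂ : ∀ y : Y₂, Tendsto (fun N => P₂ N y) atTop (𝓝 y))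
    -- (P¹_N)* → I strongly on the dual of Y¹
    (hP₁ : ∀ φ : Y₁ →L[ℝ] ℝ, Tendsto (fun N => φ.comp (P₁ N)) atTop (𝓝 φ)) :
    ∃ (N : ℕ) (C : ℝ), 0 < C ∧
      ∀ x₁ ∈ K, ∀ x₂ ∈ K,
        ‖x₁ - x₂‖ ≤
          C * ‖(P₂ N).comp ((F x₁).comp (P₁ N)) - (P₂ N).comp ((F x₂).comp (P₁ N))‖ := by
    classical
  have hKA : K ⊆ A := fun z hz => (hKWA hz).2
  have hKW : K ⊆ (W : Set X) := fun z hz => (hKWA hz).1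
  by_contra hcon
  push_neg at hcon
  -- hcon : ∀ N C, 0 < C → ∃ x₁ ∈ K, ∃ x₂ ∈ K, C * ‖...‖ < ‖x₁ - x₂‖
  obtain ⟨M₂, hM₂0, hM₂⟩ := bound_P2 P₂ hP₂
  obtain ⟨M₁, hM₁0, _, hM₁⟩ := bound_P1 P₁ hP₁
  set Qf : ℕ → (Y₁ →L[ℝ] Y₂) → (Y₁ →L[ℝ] Y₂) :=
    fun N T => (P₂ N).comp (T.comp (P₁ N)) with hQf
  have hQsub : ∀ N (T S : Y₁ →L[ℝ] Y₂), Qf N T - Qf N S = Qf N (T - S) := by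
    intro N T S; ext u; simp [hQf]
  have hQsmul : ∀ N (c : ℝ) (T : Y₁ →L[ℝ] Y₂), Qf N (c • T) = c • Qf N T := by
    intro N c T; ext u; simp [hQf]
  have hQbound : ∀ N (c : Y₁ →L[ℝ] Y₂), ‖Qf N c‖ ≤ (M₂ * M₁) * ‖c‖ := by
    intro N c
    have h1 : ‖c.comp (P₁ N)‖ ≤ ‖c‖ * M₁ :=
      (c.opNorm_comp_le _).trans (mul_le_mul_of_nonneg_left (hM₁ N) (norm_nonneg c))
    calc ‖Qf N c‖ ≤ ‖P₂ N‖ * ‖c.comp (P₁ N)‖ := (P₂ N).opNorm_comp_le _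
    _ ≤ M₂ * (‖c‖ * M₁) := mul_le_mul (hM₂ N) h1 (norm_nonneg _) hM₂0
    _ = (M₂ * M₁) * ‖c‖ := by ring
  have hnsmul : ∀ (c : ℝ) (T : Y₁ →L[ℝ] Y₂), ‖c • T‖ = ‖c‖ * ‖T‖ := fun c T => norm_smul c T
  choose xs hxsK ys hysK hlt using fun n : ℕ => hcon n ((n : ℝ) + 1) (by positivity)
  have hd : ∀ n, 0 < ‖xs n - ys n‖ := fun n => lt_of_le_of_lt (by positivity) (hlt n)
  set g : ℕ → (Y₁ →L[ℝ] Y₂) :=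
    fun n => (‖xs n - ys n‖)⁻¹ • (F (xs n) - F (ys n)) with hg
  have hQg : ∀ n, ‖Qf n (g n)‖ < 1 / ((n : ℝ) + 1) := by
    intro n
    have hrw : (P₂ n).comp ((F (xs n)).comp (P₁ n)) - (P₂ n).comp ((F (ys n)).comp (P₁ n))
        = Qf n (F (xs n) - F (ys n)) := by ext u; simp [hQf]
    have h1 : ‖Qf n (F (xs n) - F (ys n))‖ < ‖xs n - ys n‖ / ((n : ℝ) + 1) := by
      rw [lt_div_iff₀ (by positivity)]
      have := hlt n
      rw [hrw] at this
      linarith [this]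
    have h2 : ‖Qf n (g n)‖ = (‖xs n - ys n‖)⁻¹ * ‖Qf n (F (xs n) - F (ys n))‖ := by
      rw [show Qf n (g n) = (‖xs n - ys n‖)⁻¹ • Qf n (F (xs n) - F (ys n)) from
        hQsmul n _ _, hnsmul, norm_inv, norm_norm]
    rw [h2]
    have h3 := mul_lt_mul_of_pos_left h1 (inv_pos.2 (hd n))
    calc (‖xs n - ys n‖)⁻¹ * ‖Qf n (F (xs n) - F (ys n))‖
        < (‖xs n - ys n‖)⁻¹ * (‖xs n - ys n‖ / ((n : ℝ) + 1)) := h3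
    _ = 1 / ((n : ℝ) + 1) := by
        rw [div_eq_mul_inv, ← mul_assoc, inv_mul_cancel₀ (hd n).ne', one_mul, one_div]
  -- the master contradiction
  have final : ∀ (T : Y₁ →L[ℝ] Y₂), T ≠ 0 → IsCompactOperator T →
      ∀ (σ : ℕ → ℕ), StrictMono σ →
      Tendsto (fun k => g (σ k)) atTop (𝓝 T) → False := by
    intro T hT0 hTc σ hσ hgT
    have hQT : Tendsto (fun k => Qf (σ k) T) atTop (𝓝 T) :=
      (tendsto_Q P₁ P₂ hP₂ hP₁ T hTc).comp hσ.tendsto_atTop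
    have hdiff : Tendsto (fun k => Qf (σ k) (g (σ k)) - Qf (σ k) T) atTop (𝓝 0) := by
      rw [tendsto_zero_iff_norm_tendsto_zero]
      apply squeeze_zero (fun _ => norm_nonneg _)
        (g := fun k => (M₂ * M₁) * ‖g (σ k) - T‖)
        (fun k => by rw [hQsub]; exact hQbound _ _)
      have := (tendsto_sub_nhds_zero_iff.2 hgT).norm
      simpa using this.const_mul (M₂ * M₁)
    have h1 : Tendsto (fun k => Qf (σ k) (g (σ k))) atTop (𝓝 T) := by
      have := hdiff.add hQT
      rw [zero_add] at this
      refine this.congr fun k => ?_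
      abel
    have h2 : Tendsto (fun k => Qf (σ k) (g (σ k))) atTop (𝓝 0) := by
      rw [tendsto_zero_iff_norm_tendsto_zero]
      apply squeeze_zero (fun _ => norm_nonneg _) (g := fun k : ℕ => 1 / ((k : ℝ) + 1))
      · intro k
        refine (hQg (σ k)).le.trans ?_
        apply one_div_le_one_div_of_le (by positivity)
        have : (k : ℝ) ≤ (σ k : ℝ) := by exact_mod_cast hσ.le_apply
        linarith
      · exact tendsto_one_div_add_atTop_nhds_zero_nat
    exact hT0 (tendsto_nhds_unique h1 h2)
  -- extract convergent subsequence of pairs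
  obtain ⟨⟨a, b⟩, habK, φ, hφ, hφt⟩ := (hKcomp.prod hKcomp).tendsto_subseq
    (x := fun n => (xs n, ys n)) (fun n => Set.mk_mem_prod (hxsK n) (hysK n))
  have ha : a ∈ K := habK.1
  have hb : b ∈ K := habK.2
  have hta : Tendsto (fun k => xs (φ k)) atTop (𝓝 a) :=
    (continuous_fst.tendsto (a, b)).comp hφt
  have htb : Tendsto (fun k => ys (φ k)) atTop (𝓝 b) :=
    (continuous_snd.tendsto (a, b)).comp hφt
  have Fc : ∀ z ∈ A, ContinuousAt F z := fun z hz => (hF z hz).continuousAt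
  rcases eq_or_ne a b with hab | hab
  · -- case a = b : use derivative direction
    subst hab
    have haWA : a ∈ (W : Set X) ∩ A := hKWA ha
    -- unit directions in W
    set w : ℕ → W := fun n => ⟨xs n - ys n, sub_mem (hKW (hxsK n)) (hKW (hysK n))⟩ with hw
    have hwnorm : ∀ n, ‖w n‖ = ‖xs n - ys n‖ := fun n => rfl
    set u : ℕ → W := fun n => (‖xs n - ys n‖)⁻¹ • w n with hu
    have hus : ∀ n, u n ∈ Metric.sphere (0 : W) 1 := by
      intro n
      rw [Metric.mem_sphere, dist_zero_right, hu]
      have : ‖(‖xs n - ys n‖)⁻¹ • w n‖ = ‖(‖xs n - ys n‖)⁻¹‖ * ‖w n‖ := norm_smul _ _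
      rw [this, norm_inv, norm_norm, hwnorm, inv_mul_cancel₀ (hd n).ne']
    obtain ⟨τ, hτs, ψ, hψ, hψt⟩ := (isCompact_sphere (0 : W) 1).tendsto_subseq
      (x := fun k => u (φ k)) (fun k => hus (φ k))
    set σ : ℕ → ℕ := φ ∘ ψ with hσdef
    have hσ : StrictMono σ := hφ.comp hψ
    have hτ1 : ‖(τ : X)‖ = 1 := by
      have : ‖τ‖ = 1 := by simpa [dist_zero_right] using hτs
      exact this
    have hτW : (τ : X) ∈ W := τ.2
    set T : Y₁ →L[ℝ] Y₂ := F' a (τ : X) with hT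
    have hT0 : T ≠ 0 := by
      intro h
      have h2 : (τ : X) = 0 := by
        refine hF'inj a haWA hτW (zero_mem W) ?_
        rw [map_zero, ← hT, h]
      rw [h2, norm_zero] at hτ1
      norm_num at hτ1
    have hTc : IsCompactOperator T := hcomp a haWA.2 _ hτW
    -- convergence g (σ k) → T
    have htaσ : Tendsto (fun k => xs (σ k)) atTop (𝓝 a) := hta.comp hψ.tendsto_atTop
    have htbσ : Tendsto (fun k => ys (σ k)) atTop (𝓝 a) := htb.comp hψ.tendsto_atTop
    have huτ : Tendsto (fun k => ((u (σ k) : X))) atTop (𝓝 (τ : X)) :=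
      (continuous_subtype_val.tendsto τ).comp hψt
    have huX : ∀ n, ((u n : X)) = (‖xs n - ys n‖)⁻¹ • (xs n - ys n) := fun n => rfl
    have h2 : Tendsto (fun k => F' a ((u (σ k) : X))) atTop (𝓝 T) :=
      ((F' a).continuous.tendsto (τ : X)).comp huτ
    have h1 : Tendsto (fun k => g (σ k) - F' a ((u (σ k) : X))) atTop (𝓝 0) := by
      apply tendsto_zero_of_norm_ev
      intro ε hε
      have hcont : ContinuousAt F' a := hF'cont.continuousAt (hA.mem_nhds haWA.2)
      have hnb : {ξ | dist (F' ξ) (F' a) < ε} ∈ 𝓝 a :=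
        hcont (Metric.ball_mem_nhds (F' a) hε)
      obtain ⟨r, hr0, hball⟩ := Metric.mem_nhds_iff.1 hnb
      set s : Set X := K ∩ Metric.ball a r with hs
      have hsconv : Convex ℝ s := hKconv.inter (convex_ball a r)
      have hFs : ∀ ξ ∈ s, HasFDerivWithinAt F (F' ξ) s ξ :=
        fun ξ hξ => (hF ξ (hKA hξ.1)).hasFDerivWithinAt
      have hbound : ∀ ξ ∈ s, ‖F' ξ - F' a‖ ≤ ε := by
        intro ξ hξ
        have h'' : dist (F' ξ) (F' a) < ε := hball hξ.2
        have h3 : dist (F' ξ) (F' a) = ‖F' ξ - F' a‖ := dist_eq_norm (F' ξ) (F' a)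
        rw [h3] at h''
        exact h''.le
      have hxev : ∀ᶠ k in atTop, xs (σ k) ∈ Metric.ball a r :=
        htaσ (Metric.ball_mem_nhds a hr0)
      have hyev : ∀ᶠ k in atTop, ys (σ k) ∈ Metric.ball a r :=
        htbσ (Metric.ball_mem_nhds a hr0)
      filter_upwards [hxev, hyev] with k hxk hyk
      have hmvt := hsconv.norm_image_sub_le_of_norm_hasFDerivWithin_le' hFs hbound
        (x := ys (σ k)) (y := xs (σ k)) ⟨hysK _, hyk⟩ ⟨hxsK _, hxk⟩
      have hrepr : g (σ k) - F' a ((u (σ k) : X)) =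
          (‖xs (σ k) - ys (σ k)‖)⁻¹ •
            (F (xs (σ k)) - F (ys (σ k)) - F' a (xs (σ k) - ys (σ k))) := by
        rw [huX, map_smul, hg, ← smul_sub]
      rw [hrepr, hnsmul, norm_inv, norm_norm]
      calc (‖xs (σ k) - ys (σ k)‖)⁻¹ *
            ‖F (xs (σ k)) - F (ys (σ k)) - F' a (xs (σ k) - ys (σ k))‖
          ≤ (‖xs (σ k) - ys (σ k)‖)⁻¹ * (ε * ‖xs (σ k) - ys (σ k)‖) := by
            exact mul_le_mul_of_nonneg_left hmvt (by positivity)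
      _ = ε := by
            rw [mul_comm ε, ← mul_assoc, inv_mul_cancel₀ (hd (σ k)).ne', one_mul]
    have hgT : Tendsto (fun k => g (σ k)) atTop (𝓝 T) := by
      have := h1.add h2
      rw [zero_add] at this
      refine this.congr fun k => ?_
      abel
    exact final T hT0 hTc σ hσ hgT
  · -- case a ≠ b
    have hFab : F a ≠ F b := fun h => hab (hFinj (hKWA ha) (hKWA hb) h)
    have hd0 : (0:ℝ) < ‖a - b‖ := by
      rw [norm_pos_iff, sub_ne_zero]; exact hab
    set T : Y₁ →L[ℝ] Y₂ := (‖a - b‖)⁻¹ • (F a - F b) with hT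
    have hT0 : T ≠ 0 :=
      smul_ne_zero (inv_ne_zero hd0.ne') (sub_ne_zero.2 hFab)
    have hTc : IsCompactOperator T := by
      have hder2 : ∀ ξ ∈ K, IsCompactOperator (F' ξ (a - b)) := fun ξ hξ =>
        hcomp ξ (hKA hξ) _ (sub_mem (hKW ha) (hKW hb))
      have hc := diff_mem_compact hKA hKconv hF ha hb hder2
      have hco : ⇑((‖a - b‖)⁻¹ • (F a - F b)) = (‖a - b‖)⁻¹ • ⇑(F a - F b) :=
        funext fun z => rfl
      have hsm : IsCompactOperator (⇑((‖a - b‖)⁻¹ • (F a - F b))) := by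
        rw [hco]
        exact hc.smul _
      exact hsm
    have hFxa : Tendsto (fun k => F (xs (φ k))) atTop (𝓝 (F a)) :=
      ((Fc a (hKA ha)).tendsto).comp hta
    have hFyb : Tendsto (fun k => F (ys (φ k))) atTop (𝓝 (F b)) :=
      ((Fc b (hKA hb)).tendsto).comp htb
    have hdn : Tendsto (fun k => ‖xs (φ k) - ys (φ k)‖) atTop (𝓝 ‖a - b‖) :=
      (hta.sub htb).norm
    have hdninv : Tendsto (fun k => (‖xs (φ k) - ys (φ k)‖)⁻¹) atTop (𝓝 (‖a - b‖)⁻¹) :=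
      hdn.inv₀ hd0.ne'
    have hgT : Tendsto (fun k => g (φ k)) atTop (𝓝 T) := by
      rw [hT]
      exact hdninv.smul (hFxa.sub hFyb)
    exact final T hT0 hTc φ hφ hgT
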